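/- Let α be a vertex of a directed graph with integer-weighted edges and let (γₙ)ₙ≥0 be a sequence of loops starting at α such that the rotation numbers W(γₙ)/L(γₙ) converge to a real number s. Then there exists an infinite path ᾱ = (αₙ)ₙ≥0 starting at α, passing through α infinitely many times, whose rotation number lim_{n→∞} W(α₀…αₙ)/n exists and equals s. -/

import Mathlib

open Filter Topology

namespace RotAux

/-- Repetition count chosen large enough relative to accumulated error and next bound. -/
noncomputable def reps (B : ℕ → ℝ) (s : ℝ) (p : ℕ × ℤ) (k : ℕ) : ℕ :=
  ⌈((k : ℝ) + 1) * (|(p.2 : ℝ) - s * p.1| + B (k + 1) + 1)⌉₊ + 1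

/-- State `(length so far, weight so far)` after the first `k` blocks. -/
noncomputable def st (L : ℕ → ℕ) (w : ℕ → ℤ) (B : ℕ → ℝ) (s : ℝ) : ℕ → ℕ × ℤ
  | 0 => (0, 0)
  | k + 1 =>
    let p := st L w B s k
    (p.1 + reps B s p k * L k, p.2 + reps B s p k * w k)

end RotAux

/-- If `(γₖ)ₖ` is a sequence of loops at a vertex `α` of a directed graph
with integer edge weights whose rotation numbers `W(γₖ)/L(γₖ)` converge to a real
number `s`, then there is an infinite path starting at `α`, passing through `α`
infinitely many times, whose rotation number exists and equals `s`. -/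
theorem infinite_path_of_loops {V : Type*} (Adj : V → V → Prop) (W : V → V → ℤ)
    (α : V) (g : ℕ → ℕ → V) (L : ℕ → ℕ) (hL : ∀ k, 0 < L k)
    (hg0 : ∀ k, g k 0 = α) (hgn : ∀ k, g k (L k) = α)
    (hgadj : ∀ k, ∀ i < L k, Adj (g k i) (g k (i + 1)))
    (s : ℝ)
    (hconv : Tendsto
      (fun k => ((∑ i ∈ Finset.range (L k), W (g k i) (g k (i + 1)) : ℤ) : ℝ) / (L k : ℝ))
      atTop (𝓝 s)) :
    ∃ f : ℕ → V, f 0 = α ∧ (∀ n, Adj (f n) (f (n + 1))) ∧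
      {n : ℕ | f n = α}.Infinite ∧
      Tendsto (fun n => ((∑ i ∈ Finset.range n, W (f i) (f (i + 1)) : ℤ) : ℝ) / (n : ℝ))
        atTop (𝓝 s) := by
  classical
  -- edge weights along loop k, loop weight, absolute bound
  set e : ℕ → ℕ → ℤ := fun k t => W (g k t) (g k (t + 1)) with he
  set w : ℕ → ℤ := fun k => ∑ i ∈ Finset.range (L k), e k i with hw
  set M : ℕ → ℤ := fun k => ∑ t ∈ Finset.range (L k), |e k t| with hM
  set B : ℕ → ℝ := fun k => (M k : ℝ) + (L k : ℝ) * |s| with hB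
  set T : ℕ → ℕ := fun k => (RotAux.st L w B s k).1 with hT
  set A : ℕ → ℤ := fun k => (RotAux.st L w B s k).2 with hA
  set R : ℕ → ℕ := fun k => RotAux.reps B s (RotAux.st L w B s k) k with hR
  set εf : ℕ → ℝ := fun k => |(w k : ℝ) / (L k : ℝ) - s| with heps
  have hT0 : T 0 = 0 := rfl
  have hA0 : A 0 = 0 := rfl
  have hT1 : ∀ k, T (k + 1) = T k + R k * L k := fun k => rfl
  have hA1 : ∀ k, A (k + 1) = A k + R k * w k := fun k => rfl
  have hR1 : ∀ k, 1 ≤ R k := fun k => Nat.le_add_left 1 _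
  have hRceil : ∀ k : ℕ, ((k : ℝ) + 1) * (|(A k : ℝ) - s * T k| + B (k + 1) + 1) ≤ (R k : ℝ) := by
    intro k
    have h1 := Nat.le_ceil (((k : ℝ) + 1) * (|(A k : ℝ) - s * T k| + B (k + 1) + 1))
    have h2 : (⌈((k : ℝ) + 1) * (|(A k : ℝ) - s * T k| + B (k + 1) + 1)⌉₊ : ℝ) ≤ R k := by
      have : (⌈((k : ℝ) + 1) * (|(A k : ℝ) - s * T k| + B (k + 1) + 1)⌉₊ : ℕ) ≤ R k :=
        Nat.le_succ _
      exact_mod_cast this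
    linarith
  have hTmono : StrictMono T := by
    apply strictMono_nat_of_lt_succ
    intro k
    rw [hT1]
    exact Nat.lt_add_of_pos_right (Nat.mul_pos (hR1 k) (hL k))
  have hTself : ∀ k, k ≤ T k := by
    intro k
    induction k with
    | zero => simp [hT0]
    | succ k ih =>
      have := hTmono (show k < k + 1 by omega)
      omega
  have hex : ∀ n, ∃ k, n < T (k + 1) := fun n =>
    ⟨n, lt_of_le_of_lt (hTself n) (hTmono (Nat.lt_succ_self n))⟩
  set blk : ℕ → ℕ := fun n => Nat.find (hex n) with hblk
  have hblk2 : ∀ n, n < T (blk n + 1) := fun n => Nat.find_spec (hex n)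
  have hblk1 : ∀ n, T (blk n) ≤ n := by
    intro n
    rcases Nat.eq_zero_or_pos (blk n) with h | h
    · rw [h, hT0]; exact Nat.zero_le n
    · by_contra hc
      push_neg at hc
      have := Nat.find_min (hex n) (show blk n - 1 < blk n by omega)
      rw [show blk n - 1 + 1 = blk n by omega] at this
      exact this hc
  have hblkeq : ∀ k n, T k ≤ n → n < T (k + 1) → blk n = k := by
    intro k n h1 h2
    have hle : blk n ≤ k := Nat.find_min' (hex n) h2
    have hge : k ≤ blk n := by
      have : T k < T (blk n + 1) := lt_of_le_of_lt h1 (hblk2 n)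
      have := hTmono.lt_iff_lt.mp this
      omega
    omega
  have hleblk : ∀ k n, T k ≤ n → k ≤ blk n := by
    intro k n h1
    have : T k < T (blk n + 1) := lt_of_le_of_lt h1 (hblk2 n)
    have := hTmono.lt_iff_lt.mp this
    omega
  set f : ℕ → V := fun n => g (blk n) ((n - T (blk n)) % L (blk n)) with hf
  -- structure of the path
  have hstep : ∀ k n, T k ≤ n → n < T (k + 1) →
      f n = g k ((n - T k) % L k) ∧ f (n + 1) = g k ((n - T k) % L k + 1) := by
    intro k n h1 h2
    have hbk : blk n = k := hblkeq k n h1 h2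
    have hfn : f n = g k ((n - T k) % L k) := by rw [hf]; simp only [hbk]
    refine ⟨hfn, ?_⟩
    set m := n - T k with hm
    have hmn : n = T k + m := by omega
    have hmN : m < R k * L k := by
      have := hT1 k
      omega
    set t := m % L k with htdef
    have htL : t < L k := Nat.mod_lt _ (hL k)
    have hmodshift : (m + 1) % L k = (t + 1) % L k := by
      conv_lhs => rw [← Nat.div_add_mod m (L k), Nat.add_assoc]
      rw [Nat.mul_add_mod]
    rcases lt_or_eq_of_le (show n + 1 ≤ T (k + 1) from h2) with hlt | heq
    · -- n + 1 still in block k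
      have hb2 : blk (n + 1) = k := hblkeq k (n + 1) (by omega) hlt
      have hsub : n + 1 - T k = m + 1 := by omega
      have hfn1 : f (n + 1) = g k ((m + 1) % L k) := by
        rw [hf]; simp only [hb2, hsub]
      rcases lt_or_eq_of_le (show t + 1 ≤ L k from htL) with h' | h'
      · rw [hfn1, hmodshift, Nat.mod_eq_of_lt h']
      · rw [hfn1, hmodshift, h', Nat.mod_self, hg0 k, hgn k]
    · -- n + 1 = T (k+1)
      have hb2 : blk (n + 1) = k + 1 :=
        hblkeq (k + 1) (n + 1) heq.ge (by rw [heq]; exact hTmono (by omega))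
      have hfn1 : f (n + 1) = g (k + 1) 0 := by
        rw [hf]; simp only [hb2, ← heq, Nat.sub_self, Nat.zero_mod]
      have hm1 : m + 1 = R k * L k := by
        have := hT1 k
        omega
      have h0 : (t + 1) % L k = 0 := by
        rw [← hmodshift, hm1, Nat.mul_mod_left]
      have ht1 : t + 1 = L k := by
        rcases lt_or_eq_of_le (show t + 1 ≤ L k from htL) with h' | h'
        · rw [Nat.mod_eq_of_lt h'] at h0; omega
        · exact h'
      rw [hfn1, hg0 (k + 1), ht1, hgn k]
  have hadj : ∀ n, Adj (f n) (f (n + 1)) := by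
    intro n
    obtain ⟨h1, h2⟩ := hstep (blk n) n (hblk1 n) (hblk2 n)
    rw [h1, h2]
    exact hgadj _ _ (Nat.mod_lt _ (hL _))
  have hWf : ∀ k n, T k ≤ n → n < T (k + 1) →
      W (f n) (f (n + 1)) = e k ((n - T k) % L k) := by
    intro k n h1 h2
    obtain ⟨ha, hb⟩ := hstep k n h1 h2
    rw [ha, hb, he]
  -- partial sums
  set S : ℕ → ℤ := fun n => ∑ i ∈ Finset.range n, W (f i) (f (i + 1)) with hS
  have hSdiff : ∀ k m, m ≤ R k * L k →
      S (T k + m) = S (T k) + ∑ j ∈ Finset.range m, e k (j % L k) := by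
    intro k m hm
    induction m with
    | zero => simp
    | succ m ih =>
      have hSsucc : S (T k + (m + 1)) = S (T k + m) + W (f (T k + m)) (f (T k + m + 1)) := by
        rw [hS, show T k + (m + 1) = (T k + m) + 1 by omega]
        exact Finset.sum_range_succ _ _
      rw [hSsucc, ih (by omega), Finset.sum_range_succ,
        hWf k (T k + m) (by omega) (by rw [hT1]; omega),
        show T k + m - T k = m by omega]
      ring
  have hPer : ∀ k q t, ∑ j ∈ Finset.range (q * L k + t), e k (j % L k)
      = q * w k + ∑ j ∈ Finset.range t, e k (j % L k) := by
    intro k q t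
    induction q with
    | zero => simp
    | succ q ih =>
      rw [show (q + 1) * L k + t = L k + (q * L k + t) by ring, Finset.sum_range_add]
      simp only [Nat.add_mod_left]
      rw [ih]
      have hfirst : ∑ j ∈ Finset.range (L k), e k (j % L k) = w k := by
        rw [hw]
        exact Finset.sum_congr rfl fun j hj => by
          rw [Nat.mod_eq_of_lt (Finset.mem_range.mp hj)]
      rw [hfirst]
      push_cast
      ring
  have hmodsum : ∀ k t, t ≤ L k →
      ∑ j ∈ Finset.range t, e k (j % L k) = ∑ j ∈ Finset.range t, e k j := by
    intro k t ht
    exact Finset.sum_congr rfl fun j hj => by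
      rw [Nat.mod_eq_of_lt (lt_of_lt_of_le (Finset.mem_range.mp hj) ht)]
  have hSA : ∀ k, S (T k) = A k := by
    intro k
    induction k with
    | zero => rw [hT0, hA0]; simp [hS]
    | succ k ih =>
      rw [hT1, hSdiff k (R k * L k) le_rfl, ih, hA1]
      have := hPer k (R k) 0
      simp only [Nat.add_zero, Finset.range_zero, Finset.sum_empty, add_zero] at this
      rw [this]
  -- real estimates
  have hLpos : ∀ k, (0 : ℝ) < L k := fun k => by exact_mod_cast hL k
  have heps0 : ∀ k, 0 ≤ εf k := fun k => abs_nonneg _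
  have hM0 : ∀ k, (0 : ℝ) ≤ (M k : ℝ) := by
    intro k
    have : (0 : ℤ) ≤ M k := Finset.sum_nonneg fun _ _ => abs_nonneg _
    exact_mod_cast this
  have hB0 : ∀ k, 0 ≤ B k := fun k =>
    add_nonneg (hM0 k) (mul_nonneg (le_of_lt (hLpos k)) (abs_nonneg _))
  have hpre : ∀ k t, t ≤ L k → |((∑ j ∈ Finset.range t, e k j : ℤ) : ℝ)| ≤ (M k : ℝ) := by
    intro k t ht
    have h1 : |∑ j ∈ Finset.range t, e k j| ≤ M k := by
      refine le_trans (Finset.abs_sum_le_sum_abs _ _) ?_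
      exact Finset.sum_le_sum_of_subset_of_nonneg
        (Finset.range_subset_range.mpr ht) fun _ _ _ => abs_nonneg _
    exact_mod_cast h1
  have hwL : ∀ k, |(w k : ℝ) - s * L k| = (L k : ℝ) * εf k := by
    intro k
    have hne : (L k : ℝ) ≠ 0 := ne_of_gt (hLpos k)
    rw [heps]
    rw [show (w k : ℝ) - s * L k = ((w k : ℝ) / L k - s) * L k by field_simp]
    rw [abs_mul, abs_of_pos (hLpos k)]
    ring
  -- estimate on within-block partial sums
  have hPm : ∀ k m, m ≤ R k * L k →
      |((∑ j ∈ Finset.range m, e k (j % L k) : ℤ) : ℝ) - s * m| ≤ (m : ℝ) * εf k + B k := by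
    intro k m hm
    set q := m / L k with hq
    set t := m % L k with ht
    have hqt : q * L k + t = m := Nat.div_add_mod' m (L k)
    have htL : t < L k := Nat.mod_lt _ (hL k)
    have hsum : (∑ j ∈ Finset.range m, e k (j % L k) : ℤ)
        = q * w k + ∑ j ∈ Finset.range t, e k j := by
      rw [← hqt, hPer k q t, hmodsum k t (le_of_lt htL)]
    set p : ℤ := ∑ j ∈ Finset.range t, e k j with hp
    have hmr : (m : ℝ) = (q : ℝ) * L k + t := by exact_mod_cast hqt.symm
    have hid : ((∑ j ∈ Finset.range m, e k (j % L k) : ℤ) : ℝ) - s * m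
        = (q : ℝ) * ((w k : ℝ) - s * L k) + ((p : ℝ) - s * t) := by
      rw [hsum]
      push_cast
      rw [hmr]
      ring
    rw [hid]
    have h1 : |(q : ℝ) * ((w k : ℝ) - s * L k)| ≤ (m : ℝ) * εf k := by
      rw [abs_mul, Nat.abs_cast, hwL k, ← mul_assoc]
      have hqLm : (q : ℝ) * L k ≤ m := by
        have : q * L k ≤ m := Nat.div_mul_le_self m (L k)
        exact_mod_cast this
      exact mul_le_mul_of_nonneg_right hqLm (heps0 k)
    have h2 : |(p : ℝ) - s * t| ≤ B k := by
      have ha : |(p : ℝ)| ≤ (M k : ℝ) := hpre k t (le_of_lt htL)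
      have hb : |s * t| ≤ (L k : ℝ) * |s| := by
        rw [abs_mul, Nat.abs_cast]
        have : (t : ℝ) ≤ L k := by exact_mod_cast le_of_lt htL
        nlinarith [abs_nonneg s]
      calc |(p : ℝ) - s * t| ≤ |(p : ℝ)| + |s * t| := abs_sub _ _
        _ ≤ (M k : ℝ) + (L k : ℝ) * |s| := add_le_add ha hb
        _ = B k := rfl
    calc |(q : ℝ) * ((w k : ℝ) - s * L k) + ((p : ℝ) - s * t)|
        ≤ |(q : ℝ) * ((w k : ℝ) - s * L k)| + |(p : ℝ) - s * t| := abs_add_le _ _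
      _ ≤ (m : ℝ) * εf k + B k := add_le_add h1 h2
  -- the accumulated deviation
  set D : ℕ → ℝ := fun k => |(A k : ℝ) - s * T k| with hD
  have hD0 : ∀ k, 0 ≤ D k := fun k => abs_nonneg _
  have hDsucc : ∀ k, D (k + 1) ≤ D k + ((R k : ℝ) * L k) * εf k := by
    intro k
    have hid : (A (k + 1) : ℝ) - s * T (k + 1)
        = ((A k : ℝ) - s * T k) + (R k : ℝ) * ((w k : ℝ) - s * L k) := by
      rw [hA1, hT1]
      push_cast
      ring
    rw [hD]
    calc |(A (k + 1) : ℝ) - s * T (k + 1)|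
        = |((A k : ℝ) - s * T k) + (R k : ℝ) * ((w k : ℝ) - s * L k)| := by rw [hid]
      _ ≤ |(A k : ℝ) - s * T k| + |(R k : ℝ) * ((w k : ℝ) - s * L k)| := abs_add_le _ _
      _ = D k + ((R k : ℝ) * L k) * εf k := by
          rw [abs_mul, Nat.abs_cast, hwL k]; ring
  have hTlb : ∀ k : ℕ, ((k : ℝ) + 1) * (D k + B (k + 1) + 1) ≤ (T (k + 1) : ℝ) := by
    intro k
    have h1 : (R k : ℝ) ≤ T (k + 1) := by
      have : R k ≤ T (k + 1) := by
        have h2 : R k ≤ R k * L k := Nat.le_mul_of_pos_right _ (hL k)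
        have := hT1 k
        omega
      exact_mod_cast this
    exact le_trans (hRceil k) h1
  -- main per-block estimate
  have hmain : ∀ k n, T (k + 1) ≤ n → n < T (k + 2) →
      |((S n : ℤ) : ℝ) / n - s| ≤ 1 / ((k : ℝ) + 1) + εf k + εf (k + 1) := by
    intro k n h1 h2
    set m := n - T (k + 1) with hm
    have hmn : n = T (k + 1) + m := by omega
    have hmN : m ≤ R (k + 1) * L (k + 1) := by
      have h3 : T (k + 2) = T (k + 1) + R (k + 1) * L (k + 1) := hT1 (k + 1)
      omega
    have hTn1 : (1 : ℝ) ≤ T (k + 1) := by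
      have := hTlb k
      nlinarith [hD0 k, hB0 (k + 1), Nat.cast_nonneg (α := ℝ) k]
    have hnpos : (0 : ℝ) < n := by
      have : (T (k + 1) : ℝ) ≤ n := by exact_mod_cast h1
      linarith
    have hnr : (n : ℝ) = (T (k + 1) : ℝ) + m := by exact_mod_cast hmn
    -- |S n - s n| bound
    have hSn : S n = A (k + 1) + ∑ j ∈ Finset.range m, e (k + 1) (j % L (k + 1)) := by
      rw [hmn, hSdiff (k + 1) m hmN, hSA (k + 1)]
    have key : |((S n : ℤ) : ℝ) - s * n| ≤ D (k + 1) + (m : ℝ) * εf (k + 1) + B (k + 1) := by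
      have hid : ((S n : ℤ) : ℝ) - s * n
          = ((A (k + 1) : ℝ) - s * T (k + 1))
            + (((∑ j ∈ Finset.range m, e (k + 1) (j % L (k + 1)) : ℤ) : ℝ) - s * m) := by
        rw [hSn]
        push_cast
        rw [hnr]
        ring
      rw [hid]
      calc _ ≤ |(A (k + 1) : ℝ) - s * T (k + 1)|
            + |((∑ j ∈ Finset.range m, e (k + 1) (j % L (k + 1)) : ℤ) : ℝ) - s * m| :=
              abs_add_le _ _
        _ ≤ D (k + 1) + ((m : ℝ) * εf (k + 1) + B (k + 1)) :=
              add_le_add le_rfl (hPm (k + 1) m hmN)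
        _ = D (k + 1) + (m : ℝ) * εf (k + 1) + B (k + 1) := by ring
    have hRLn : ((R k : ℝ) * L k) ≤ n := by
      have h3 : R k * L k ≤ T (k + 1) := by
        have := hT1 k; omega
      have h4 : R k * L k ≤ n := le_trans h3 h1
      exact_mod_cast h4
    have hmlen : (m : ℝ) ≤ n := by
      have : m ≤ n := by omega
      exact_mod_cast this
    have key2 : |((S n : ℤ) : ℝ) - s * n|
        ≤ (D k + B (k + 1)) + (n : ℝ) * εf k + (n : ℝ) * εf (k + 1) := by
      have := hDsucc k
      have h5 : ((R k : ℝ) * L k) * εf k ≤ (n : ℝ) * εf k :=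
        mul_le_mul_of_nonneg_right hRLn (heps0 k)
      have h6 : (m : ℝ) * εf (k + 1) ≤ (n : ℝ) * εf (k + 1) :=
        mul_le_mul_of_nonneg_right hmlen (heps0 (k + 1))
      linarith [key]
    -- divide by n
    have hdivid : ((S n : ℤ) : ℝ) / n - s = (((S n : ℤ) : ℝ) - s * n) / n := by
      field_simp
    have habs : |((S n : ℤ) : ℝ) / n - s| = |((S n : ℤ) : ℝ) - s * n| / n := by
      rw [hdivid, abs_div, abs_of_pos hnpos]
    have hfrac : (D k + B (k + 1)) / n ≤ 1 / ((k : ℝ) + 1) := by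
      have hc0 : 0 ≤ D k + B (k + 1) := add_nonneg (hD0 k) (hB0 (k + 1))
      have hkpos : (0 : ℝ) < (k : ℝ) + 1 := by positivity
      rw [div_le_div_iff₀ hnpos hkpos]
      have h7 : (T (k + 1) : ℝ) ≤ n := by exact_mod_cast h1
      have := hTlb k
      nlinarith
    rw [habs]
    calc |((S n : ℤ) : ℝ) - s * n| / n
        ≤ ((D k + B (k + 1)) + (n : ℝ) * εf k + (n : ℝ) * εf (k + 1)) / n :=
          (div_le_div_iff_of_pos_right hnpos).mpr key2
      _ = (D k + B (k + 1)) / n + εf k + εf (k + 1) := by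
          field_simp
      _ ≤ 1 / ((k : ℝ) + 1) + εf k + εf (k + 1) := by linarith [hfrac]
  -- convergence of the error terms
  have hepslim : Tendsto εf atTop (𝓝 0) := by
    have h1 : Tendsto (fun k => (w k : ℝ) / (L k : ℝ) - s) atTop (𝓝 (s - s)) :=
      hconv.sub_const s
    rw [sub_self] at h1
    have := h1.abs
    simpa using this
  have hGlim : Tendsto (fun j : ℕ => 1 / ((j : ℝ) + 1) + εf j + εf (j + 1)) atTop (𝓝 0) := by
    have h1 : Tendsto (fun j : ℕ => 1 / ((j : ℝ) + 1)) atTop (𝓝 0) :=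
      tendsto_one_div_add_atTop_nhds_zero_nat
    have h3 : Tendsto (fun j : ℕ => εf (j + 1)) atTop (𝓝 0) :=
      hepslim.comp (tendsto_add_atTop_nat 1)
    simpa using (h1.add hepslim).add h3
  have hphi : Tendsto (fun n => blk n - 1) atTop atTop := by
    rw [tendsto_atTop_atTop]
    intro b
    refine ⟨T (b + 1), fun n hn => ?_⟩
    have := hleblk (b + 1) n hn
    omega
  have hbound : ∀ᶠ n in atTop, |((S n : ℤ) : ℝ) / n - s|
      ≤ 1 / (((blk n - 1 : ℕ) : ℝ) + 1) + εf (blk n - 1) + εf (blk n - 1 + 1) := by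
    rw [eventually_atTop]
    refine ⟨T 1, fun n hn => ?_⟩
    have h1 : 1 ≤ blk n := hleblk 1 n hn
    have hb : blk n - 1 + 1 = blk n := by omega
    have hb2 : blk n - 1 + 2 = blk n + 1 := by omega
    exact hmain (blk n - 1) n (by rw [hb]; exact hblk1 n) (by rw [hb2]; exact hblk2 n)
  have htend0 : Tendsto (fun n => |((S n : ℤ) : ℝ) / n - s|) atTop (𝓝 0) := by
    refine squeeze_zero' (Eventually.of_forall fun n => abs_nonneg _) hbound ?_
    exact hGlim.comp hphi
  have htendsto : Tendsto (fun n => ((S n : ℤ) : ℝ) / n) atTop (𝓝 s) := by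
    rw [tendsto_iff_dist_tendsto_zero]
    simpa [Real.dist_eq] using htend0
  -- start at α
  have hf0 : f 0 = α := by
    have hlt : (0 : ℕ) < T 1 := lt_of_le_of_lt (le_of_eq hT0.symm) (hTmono (by omega))
    have hb : blk 0 = 0 := hblkeq 0 0 (le_of_eq hT0) hlt
    rw [hf]
    simp only [hb, hT0, Nat.sub_self, Nat.zero_mod]
    exact hg0 0
  -- infinitely many returns
  have hfT : ∀ k, f (T k) = α := by
    intro k
    have hb : blk (T k) = k := hblkeq k (T k) le_rfl (hTmono (Nat.lt_succ_self k))
    rw [hf]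
    simp only [hb, Nat.sub_self, Nat.zero_mod]
    exact hg0 k
  have hinf : {n : ℕ | f n = α}.Infinite :=
    Set.infinite_of_injective_forall_mem hTmono.injective fun k => hfT k
  exact ⟨f, hf0, hadj, hinf, htendsto⟩
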